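/- There exists a constant C > 0 such that for every prime p with p ∉ S and p ≠ 2, and for all s, w ∈ ℂ with Re s ≥ 15/16 and Re w ≥ 2k − 17/16, one has |G_p(s,w) − 1| ≤ C·p^{−5/4}. -/

import Mathlib

open scoped BigOperators Classical
open Filter Asymptotics

noncomputable section

/-- Value of the multiplicative function `r*_{4k}` at the prime power `p^l`. -/
def rstarPP (k p l : ℕ) : ℝ :=
  if p = 2 ∧ 1 ≤ l then
    (1 - (-1 : ℝ)^k / (1 - 2^(2*k-1))) * 2^(l*(2*k-1))
      - (-1 : ℝ)^k * (1 - 2^(2*k)) / (1 - 2^(2*k-1))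
  else (1 - (p : ℝ)^((l+1)*(2*k-1))) / (1 - (p : ℝ)^(2*k-1))

/-- The multiplicative function `r*_{4k}`, given by its values on prime powers. -/
def rstar (k n : ℕ) : ℝ := n.factorization.prod (fun p l => rstarPP k p l)

/-- The indicator function `1_S` of rationals having no `p`-adic valuation equal to `1`
outside of `S`. -/
def oneS (S : Finset ℕ) (q : ℚ) : ℝ :=
  if ∀ p : ℕ, p.Prime → p ∉ S → padicValRat p q ≠ 1 then 1 else 0

/-- `r_{4k}(d)`: the number of representations of `d` as a sum of `4k` squares. -/
def rquad (k d : ℕ) : ℕ :=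
  Set.ncard {y : Fin (4*k) → ℤ | ∑ i, (y i)^2 = (d : ℤ)}

/-- The divisor sum `S(X,Y)`. -/
def Ssum (k : ℕ) (S : Finset ℕ) (X Y : ℝ) : ℝ :=
  ∑ n ∈ Finset.Icc 1 ⌊X⌋₊, ∑ d ∈ (n^3).divisors.filter (fun d : ℕ => (d : ℝ) ≤ Y),
    rstar k d * oneS S ((n : ℚ)^2 / (d : ℚ))

/-- The divisor sum `T(B)`. -/
def Tsum (k : ℕ) (S : Finset ℕ) (B : ℝ) : ℝ :=
  ∑ n ∈ Finset.Icc 1 ⌊B⌋₊, ∑ d ∈ (n^3).divisors.filter (fun d : ℕ => (d : ℝ) ≤ (n : ℝ)^3 / B),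
    rstar k d * oneS S ((n : ℚ)^2 / (d : ℚ))

/-- `M(X,Y) = ∫₀^X ∫₀^Y S(x,y) dy dx`. -/
def Msum (k : ℕ) (S : Finset ℕ) (X Y : ℝ) : ℝ :=
  ∫ x in (0:ℝ)..X, ∫ y in (0:ℝ)..Y, Ssum k S x y

/-- Second difference `𝒟f(X₁,X₂;Y₁,Y₂)`. -/
def DD (f : ℝ → ℝ → ℝ) (X₁ X₂ Y₁ Y₂ : ℝ) : ℝ :=
  f X₁ Y₁ + f X₂ Y₂ - f X₁ Y₂ - f X₂ Y₁

/-- The counting function `N*(B)` (no coprimality condition). -/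
def Nstar (k : ℕ) (S : Finset ℕ) (B : ℝ) : ℕ :=
  Set.ncard {P : ℤ × (Fin (4*k) → ℤ) × ℤ |
    P.1 ≠ 0 ∧ P.1^3 = (∑ i, (P.2.1 i)^2) * P.2.2 ∧
    max (max |(P.1 : ℝ)| (Real.sqrt (∑ i, ((P.2.1 i : ℝ))^2))) |(P.2.2 : ℝ)| ≤ B ∧
    ∀ p : ℕ, p.Prime → p ∉ S →
      (padicValInt p P.2.2 : ℤ) - (padicValInt p P.1 : ℤ) ≠ 1}

/-- The counting function `N(B)` of semi-integral points. -/
def Ncount (k : ℕ) (S : Finset ℕ) (B : ℝ) : ℕ :=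
  Set.ncard {P : ℤ × (Fin (4*k) → ℤ) × ℤ |
    Int.gcd P.1 ((Int.gcd (Finset.univ.gcd P.2.1) P.2.2 : ℕ) : ℤ) = 1 ∧
    P.1 ≠ 0 ∧ P.1^3 = (∑ i, (P.2.1 i)^2) * P.2.2 ∧
    max (max |(P.1 : ℝ)| (Real.sqrt (∑ i, ((P.2.1 i : ℝ))^2))) |(P.2.2 : ℝ)| ≤ B ∧
    ∀ p : ℕ, p.Prime → p ∉ S →
      (padicValInt p P.2.2 : ℤ) - (padicValInt p P.1 : ℤ) ≠ 1}

/-- The `a`-th term of the local series `F_p(s,w)`. -/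
def FpTerm (k : ℕ) (S : Finset ℕ) (p : ℕ) (s w : ℂ) (a : ℕ) : ℂ :=
  if p ∈ S then
    (p : ℂ)^(-(a : ℂ) * s) *
      ∑ b ∈ Finset.range (3*a+1), (p : ℂ)^(-(b : ℂ) * w) * (rstar k (p^b) : ℂ)
  else
    (p : ℂ)^(-(a : ℂ) * s) *
      ∑ b ∈ (Finset.range (3*a+1)).filter (fun b : ℕ => (b : ℤ) ≠ 2*(a : ℤ) - 1),
        (p : ℂ)^(-(b : ℂ) * w) * (rstar k (p^b) : ℂ)

/-- The local series `F_p(s,w)`. -/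
def Fp (k : ℕ) (S : Finset ℕ) (p : ℕ) (s w : ℂ) : ℂ := ∑' a : ℕ, FpTerm k S p s w a

/-- The local factor `G_p(s,w)`. -/
def Gp (k : ℕ) (S : Finset ℕ) (p : ℕ) (s w : ℂ) : ℂ :=
  (1 - (p : ℂ)^(-s)) * (1 - (p : ℂ)^(-(s + 2*(w - 2*(k : ℂ) + 1)))) *
    (1 - (p : ℂ)^(-(s + 3*(w - 2*(k : ℂ) + 1)))) * Fp k S p s w

/-- The Euler product `G_S(s,w)`. -/
def GS (k : ℕ) (S : Finset ℕ) (s w : ℂ) : ℂ :=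
  ∏' p : Nat.Primes, Gp k S (p : ℕ) s w

/-- The double Dirichlet series `F(s,w)`. -/
def Ffun (k : ℕ) (S : Finset ℕ) (s w : ℂ) : ℂ :=
  ∑' n : ℕ, ∑ d ∈ (n^3).divisors,
    (rstar k d : ℂ) * (oneS S ((n : ℚ)^2 / (d : ℚ)) : ℂ) * (n : ℂ)^(-s) * (d : ℂ)^(-w)

/-- The local series `F_p(1, 2k-1)` (real-valued). -/
def FpOne (k : ℕ) (S : Finset ℕ) (p : ℕ) : ℝ :=
  if p ∈ S then
    ∑' a : ℕ, ((p : ℝ)^a)⁻¹ *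
      ∑ b ∈ Finset.range (3*a+1), ((p : ℝ)^(b*(2*k-1)))⁻¹ * rstar k (p^b)
  else
    ∑' a : ℕ, ((p : ℝ)^a)⁻¹ *
      ∑ b ∈ (Finset.range (3*a+1)).filter (fun b : ℕ => (b : ℤ) ≠ 2*(a : ℤ) - 1),
        ((p : ℝ)^(b*(2*k-1)))⁻¹ * rstar k (p^b)

/-- The constant `𝔠 = ∏_p (1-1/p)³ F_p(1,2k-1)`. -/
def cConst (k : ℕ) (S : Finset ℕ) : ℝ :=
  ∏' p : Nat.Primes, (1 - ((p : ℕ) : ℝ)⁻¹)^3 * FpOne k S (p : ℕ)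

/-- Uniform estimate `G_p(s,w) = 1 + O(p^{-5/4})` on `Re s ≥ 15/16`, `Re w ≥ 2k − 17/16`,
for primes `p ∉ S ∪ {2}`. -/

lemma rstar_prime_pow_aux {p : ℕ} (hp : p.Prime) (hp2 : p ≠ 2) {k : ℕ} (hk : 0 < k) (b : ℕ) :
    rstar k (p ^ b) = (((p:ℝ) ^ (2*k-1)) ^ (b+1) - 1) / ((p:ℝ) ^ (2*k-1) - 1) := by
  have hp1 : (2:ℝ) ≤ (p:ℝ) := by exact_mod_cast hp.two_le
  have hP : (2:ℝ) ≤ (p:ℝ) ^ (2*k-1) := by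
    calc (2:ℝ) ≤ (p:ℝ)^1 := by simpa using hp1
    _ ≤ (p:ℝ)^(2*k-1) := pow_le_pow_right₀ (by linarith) (by omega)
  have hP1 : (p:ℝ) ^ (2*k-1) - 1 ≠ 0 := by linarith
  have h0 : rstarPP k p 0 = 1 := by
    simp only [rstarPP, hp2, false_and, if_false]
    rw [zero_add, one_mul, div_self]
    intro h; apply hP1; linarith [sub_eq_zero.mp h]
  cases b with
  | zero => simp [rstar, pow_one, div_self hP1]
  | succ n =>
    rw [rstar, hp.factorization_pow, Finsupp.prod_single_index h0]
    simp only [rstarPP, hp2, false_and, if_false]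
    rw [mul_comm (n+1+1) (2*k-1), pow_mul]
    rw [← neg_div_neg_eq]
    ring_nf

lemma rstar_pp_bound_aux {P : ℝ} (hP : 2 ≤ P) (b : ℕ) :
    |(P ^ (b+1) - 1) / (P - 1)| ≤ 2 * P ^ b := by
  have h1 : (0:ℝ) < P - 1 := by linarith
  have h2 : (1:ℝ) ≤ P ^ (b+1) := by
    nlinarith [pow_pos (show (0:ℝ) < P by linarith) (b+1),
      pow_le_pow_right₀ (show (1:ℝ) ≤ P by linarith) (Nat.zero_le (b+1))]
  have hb : (0:ℝ) < P ^ b := pow_pos (by linarith) b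
  rw [abs_of_nonneg (div_nonneg (by linarith) h1.le), div_le_iff₀ h1]
  have h3 : P ^ (b+1) = P ^ b * P := pow_succ P b
  nlinarith

lemma key_poly_bound {X Y Z E R : ℂ} {ρ : ℝ} (hX : ‖X‖ ≤ ρ) (hY : ‖Y‖ ≤ ρ) (hZ : ‖Z‖ ≤ ρ)
    (hρ : ρ ≤ 1/2) (hρ0 : 0 ≤ ρ) :
    ‖(1-X)*(1-Y)*(1-Z)*(1+X+Y+Z+E+R) - 1‖ ≤ 18*ρ^2 + 4*(‖E‖ + ‖R‖) := by
  have hρ2 : (0:ℝ) ≤ ρ^2 := by positivity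
  have he1 : ‖X+Y+Z‖ ≤ 3*ρ := by
    calc ‖X+Y+Z‖ ≤ ‖X+Y‖ + ‖Z‖ := norm_add_le _ _
      _ ≤ ‖X‖ + ‖Y‖ + ‖Z‖ := by linarith [norm_add_le X Y]
      _ ≤ 3*ρ := by linarith
  have hXY : ‖X*Y‖ ≤ ρ^2 := by
    rw [norm_mul, sq]; exact mul_le_mul hX hY (norm_nonneg _) hρ0
  have hYZ : ‖Y*Z‖ ≤ ρ^2 := by
    rw [norm_mul, sq]; exact mul_le_mul hY hZ (norm_nonneg _) hρ0
  have hXZ : ‖X*Z‖ ≤ ρ^2 := by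
    rw [norm_mul, sq]; exact mul_le_mul hX hZ (norm_nonneg _) hρ0
  have he2 : ‖X*Y+Y*Z+X*Z‖ ≤ 3*ρ^2 := by
    calc ‖X*Y+Y*Z+X*Z‖ ≤ ‖X*Y+Y*Z‖ + ‖X*Z‖ := norm_add_le _ _
      _ ≤ ‖X*Y‖ + ‖Y*Z‖ + ‖X*Z‖ := by linarith [norm_add_le (X*Y) (Y*Z)]
      _ ≤ 3*ρ^2 := by linarith
  have he3 : ‖X*Y*Z‖ ≤ ρ^3 := by
    rw [norm_mul]
    calc ‖X*Y‖*‖Z‖ ≤ ρ^2*ρ := mul_le_mul hXY hZ (norm_nonneg _) hρ2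
      _ = ρ^3 := by ring
  have h1 : ‖(X+Y+Z)^2‖ ≤ 9*ρ^2 := by
    rw [norm_pow]
    calc ‖X+Y+Z‖^2 ≤ (3*ρ)^2 := pow_le_pow_left₀ (norm_nonneg _) he1 2
      _ = 9*ρ^2 := by ring
  have h2 : ‖(X+Y+Z)*(X*Y+Y*Z+X*Z)‖ ≤ 9*ρ^3 := by
    rw [norm_mul]
    calc ‖X+Y+Z‖*‖X*Y+Y*Z+X*Z‖ ≤ (3*ρ)*(3*ρ^2) :=
        mul_le_mul he1 he2 (norm_nonneg _) (by positivity)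
      _ = 9*ρ^3 := by ring
  have h3 : ‖(X+Y+Z)*(X*Y*Z)‖ ≤ 3*ρ^4 := by
    rw [norm_mul]
    calc ‖X+Y+Z‖*‖X*Y*Z‖ ≤ (3*ρ)*ρ^3 := mul_le_mul he1 he3 (norm_nonneg _) (by positivity)
      _ = 3*ρ^4 := by ring
  have hid : (1-X)*(1-Y)*(1-Z)*(1+X+Y+Z+E+R) - 1
      = (-((X+Y+Z)^2) + ((X*Y+Y*Z+X*Z) + ((X+Y+Z)*(X*Y+Y*Z+X*Z)
          - (X*Y*Z + (X+Y+Z)*(X*Y*Z)))))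
        + (1-X)*((1-Y)*((1-Z)*(E+R))) := by ring
  have s1 : ‖X*Y*Z + (X+Y+Z)*(X*Y*Z)‖ ≤ ρ^3 + 3*ρ^4 :=
    (norm_add_le _ _).trans (by linarith)
  have s2 : ‖(X+Y+Z)*(X*Y+Y*Z+X*Z) - (X*Y*Z + (X+Y+Z)*(X*Y*Z))‖ ≤ 9*ρ^3 + (ρ^3 + 3*ρ^4) :=
    (norm_sub_le _ _).trans (by linarith)
  have s3 : ‖(X*Y+Y*Z+X*Z) + ((X+Y+Z)*(X*Y+Y*Z+X*Z) - (X*Y*Z + (X+Y+Z)*(X*Y*Z)))‖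
      ≤ 3*ρ^2 + (9*ρ^3 + (ρ^3 + 3*ρ^4)) := (norm_add_le _ _).trans (by linarith)
  have s4 : ‖(-((X+Y+Z)^2) + ((X*Y+Y*Z+X*Z) + ((X+Y+Z)*(X*Y+Y*Z+X*Z)
      - (X*Y*Z + (X+Y+Z)*(X*Y*Z)))))‖ ≤ 9*ρ^2 + (3*ρ^2 + (9*ρ^3 + (ρ^3 + 3*ρ^4))) := by
    refine (norm_add_le _ _).trans ?_
    rw [norm_neg]
    linarith
  have c3 : ρ^3 ≤ (1/2)*ρ^2 := by nlinarith [mul_le_mul_of_nonneg_right hρ hρ2]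
  have c4 : ρ^4 ≤ (1/4)*ρ^2 := by nlinarith [mul_le_mul_of_nonneg_right hρ hρ0, hρ2]
  have n1 : ‖(1:ℂ)-X‖ ≤ 3/2 := (norm_sub_le _ _).trans (by rw [norm_one]; linarith)
  have n2 : ‖(1:ℂ)-Y‖ ≤ 3/2 := (norm_sub_le _ _).trans (by rw [norm_one]; linarith)
  have n3 : ‖(1:ℂ)-Z‖ ≤ 3/2 := (norm_sub_le _ _).trans (by rw [norm_one]; linarith)
  have n4 : ‖E+R‖ ≤ ‖E‖+‖R‖ := norm_add_le _ _
  have m3 : ‖(1-Z)*(E+R)‖ ≤ (3/2)*(‖E‖+‖R‖) := by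
    rw [norm_mul]; exact mul_le_mul n3 n4 (norm_nonneg _) (by norm_num)
  have m2 : ‖(1-Y)*((1-Z)*(E+R))‖ ≤ (3/2)*((3/2)*(‖E‖+‖R‖)) := by
    rw [norm_mul]; exact mul_le_mul n2 m3 (norm_nonneg _) (by norm_num)
  have m1 : ‖(1-X)*((1-Y)*((1-Z)*(E+R)))‖ ≤ (3/2)*((3/2)*((3/2)*(‖E‖+‖R‖))) := by
    rw [norm_mul]; exact mul_le_mul n1 m2 (norm_nonneg _) (by norm_num)
  rw [hid]
  refine (norm_add_le _ _).trans ?_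
  have hER : (0:ℝ) ≤ ‖E‖ + ‖R‖ := by positivity
  calc _ ≤ (9*ρ^2 + (3*ρ^2 + (9*ρ^3 + (ρ^3 + 3*ρ^4)))) + (3/2)*((3/2)*((3/2)*(‖E‖+‖R‖))) := by
        linarith
    _ ≤ 18*ρ^2 + 4*(‖E‖ + ‖R‖) := by nlinarith

set_option maxHeartbeats 2000000 in
theorem Gp_sub_one_bound (k : ℕ) (hk : 0 < k) (S : Finset ℕ) (hS : ∀ p ∈ S, p.Prime) :
    ∃ C > 0, ∀ p : ℕ, p.Prime → p ∉ S → p ≠ 2 → ∀ s w : ℂ,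
      15/16 ≤ s.re → 2 * (k : ℝ) - 17/16 ≤ w.re →
      ‖Gp k S p s w - 1‖ ≤ C * (p : ℝ)^(-(5/4 : ℝ)) := by
  classical
  have hgs : ∀ c d : ℝ, Summable (fun a : ℕ => (c*(a:ℝ)+d) * (1/2:ℝ)^a) := by
    intro c d
    have h1 : Summable (fun a : ℕ => (a:ℝ) * (1/2:ℝ)^a) := by
      simpa using summable_pow_mul_geometric_of_norm_lt_one (R := ℝ) 1 (r := 1/2) (by norm_num)
    have h2 : Summable (fun a : ℕ => ((1:ℝ)/2)^a) :=
      summable_geometric_of_lt_one (by norm_num) (by norm_num)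
    exact ((h1.mul_left c).add (h2.mul_left d)).congr fun a => by ring
  set C₀ : ℝ := ∑' a : ℕ, (6*(a:ℝ)+14) * (1/2:ℝ)^a with hC₀def
  have hC₀ : 0 ≤ C₀ := tsum_nonneg fun a => by positivity
  refine ⟨38 + 4*C₀, by linarith, ?_⟩
  intro p hp hpS hp2 s w hs hw
  have hp3 : 3 ≤ p := by have := hp.two_le; omega
  have hr3 : (3:ℝ) ≤ (p:ℝ) := by exact_mod_cast hp3
  have hr0 : (0:ℝ) < (p:ℝ) := by linarith
  have hr1 : (1:ℝ) ≤ (p:ℝ) := by linarith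
  have hq : ((p:ℕ):ℂ) ≠ 0 := Nat.cast_ne_zero.mpr hp.pos.ne'
  have hk1 : (1:ℝ) ≤ (k:ℝ) := by exact_mod_cast hk
  have hk2 : 1 ≤ 2*k := by omega
  have hmcast : ((2*k-1 : ℕ):ℝ) = 2*(k:ℝ) - 1 := by
    rw [Nat.cast_sub hk2]; push_cast; ring
  have hmcastC : ((2*k-1 : ℕ):ℂ) = 2*(k:ℂ) - 1 := by
    rw [Nat.cast_sub hk2]; push_cast; ring
  -- abbreviations
  set u : ℂ := (p:ℂ)^(-s) with hu
  set v : ℂ := (p:ℂ)^(-w) with hv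
  set t : ℂ := (p:ℂ)^(2*k-1 : ℕ) with ht
  set ρ : ℝ := (p:ℝ) ^ (-(3/4) : ℝ) with hρdef
  have hρ0 : 0 ≤ ρ := Real.rpow_nonneg hr0.le _
  have hnorm : ∀ z : ℂ, ‖(p:ℂ) ^ z‖ = (p:ℝ) ^ z.re := fun z =>
    Complex.norm_natCast_cpow_of_pos hp.pos z
  have hrle : ∀ {x y : ℝ}, x ≤ y → (p:ℝ) ^ x ≤ (p:ℝ) ^ y := fun h =>
    Real.rpow_le_rpow_of_exponent_le hr1 h
  have hpowb : ∀ (x : ℝ) (b : ℕ), ((p:ℝ) ^ x) ^ b = (p:ℝ) ^ (x * b) := by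
    intro x b
    rw [← Real.rpow_natCast ((p:ℝ) ^ x) b, ← Real.rpow_mul hr0.le]
  have hun : ‖u‖ = (p:ℝ) ^ (-s.re) := by rw [hu, hnorm]; simp
  have hvn : ‖v‖ = (p:ℝ) ^ (-w.re) := by rw [hv, hnorm]; simp
  have htn : ‖t‖ = (p:ℝ) ^ (((2*k-1 : ℕ):ℝ)) := by
    rw [ht, norm_pow, Complex.norm_natCast, Real.rpow_natCast]
  have hmon : ∀ b j : ℕ, ‖u * v^b * t^j‖
      = (p:ℝ) ^ (-s.re + -w.re*b + ((2*k-1:ℕ):ℝ)*j) := by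
    intro b j
    rw [norm_mul, norm_mul, norm_pow, norm_pow, hun, hvn, htn, hpowb, hpowb,
      ← Real.rpow_add hr0, ← Real.rpow_add hr0]
  have hub : ∀ (b j : ℕ) (c : ℝ), -s.re + -w.re*b + ((2*k-1:ℕ):ℝ)*j ≤ c →
      ‖u * v^b * t^j‖ ≤ (p:ℝ) ^ c := by
    intro b j c h; rw [hmon b j]; exact hrle h
  -- ρ ≤ 1/2
  have h2r : (2:ℝ) ≤ (p:ℝ) ^ ((3:ℝ)/4) := by
    have h4 : ((p:ℝ) ^ ((3:ℝ)/4)) ^ (4:ℕ) = (p:ℝ) ^ (3:ℕ) := by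
      rw [← Real.rpow_natCast ((p:ℝ) ^ ((3:ℝ)/4)) 4, ← Real.rpow_mul hr0.le,
        ← Real.rpow_natCast (p:ℝ) 3]
      norm_num
    have h27 : (2:ℝ)^(4:ℕ) ≤ ((p:ℝ) ^ ((3:ℝ)/4))^(4:ℕ) := by
      rw [h4]
      have := pow_le_pow_left₀ (by norm_num : (0:ℝ) ≤ 3) hr3 3
      norm_num at this ⊢
      linarith
    exact le_of_pow_le_pow_left₀ (by norm_num) (Real.rpow_nonneg hr0.le _) h27
  have hρhalf : ρ ≤ 1/2 := by
    rw [hρdef, show (-(3/4) : ℝ) = -((3:ℝ)/4) by norm_num, Real.rpow_neg hr0.le]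
    calc ((p:ℝ) ^ ((3:ℝ)/4))⁻¹ ≤ (2:ℝ)⁻¹ := inv_anti₀ (by norm_num) h2r
      _ = 1/2 := by norm_num
  -- rstar facts
  set P : ℝ := (p:ℝ) ^ (2*k-1 : ℕ) with hPdef
  have hP2 : (2:ℝ) ≤ P := by
    rw [hPdef]
    calc (2:ℝ) ≤ (p:ℝ)^1 := by simpa using (by linarith : (2:ℝ) ≤ (p:ℝ))
      _ ≤ (p:ℝ)^(2*k-1) := pow_le_pow_right₀ hr1 (by omega)
  have hrs : ∀ b : ℕ, rstar k (p^b) = (P^(b+1) - 1)/(P - 1) := fun b =>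
    rstar_prime_pow_aux hp hp2 hk b
  have hrsb : ∀ b : ℕ, |rstar k (p^b)| ≤ 2 * P^b := fun b => by
    rw [hrs b]; exact rstar_pp_bound_aux hP2 b
  have htP : ((P : ℝ) : ℂ) = t := by rw [hPdef, ht]; push_cast; ring
  have hP1ne : P - 1 ≠ 0 := by linarith
  have hrs0 : (rstar k (p^0) : ℂ) = 1 := by
    rw [hrs 0]; norm_num [div_self hP1ne]
  have hrs2 : (rstar k (p^2) : ℂ) = 1 + t + t^2 := by
    have : rstar k (p^2) = 1 + P + P^2 := by
      rw [hrs 2, div_eq_iff hP1ne]; ring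
    rw [this]; push_cast [htP]; ring
  have hrs3 : (rstar k (p^3) : ℂ) = 1 + t + t^2 + t^3 := by
    have : rstar k (p^3) = 1 + P + P^2 + P^3 := by
      rw [hrs 3, div_eq_iff hP1ne]; ring
    rw [this]; push_cast [htP]; ring
  -- cpow manipulations
  have hcn : ∀ (n : ℕ) (x : ℂ), (p:ℂ) ^ (-((n:ℕ):ℂ) * x) = ((p:ℂ) ^ (-x))^n := by
    intro n x
    rw [show (-((n:ℕ):ℂ) * x) = ((n:ℕ):ℂ) * (-x) by ring, Complex.cpow_nat_mul]
  -- FpTerm values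
  have hF0 : FpTerm k S p s w 0 = 1 := by
    rw [FpTerm, if_neg hpS]
    have hset : (Finset.range (3*0+1)).filter (fun b : ℕ => (b:ℤ) ≠ 2*((0:ℕ):ℤ) - 1)
        = {0} := by decide
    rw [hset, Finset.sum_singleton, hcn 0 s, hcn 0 w, hrs0]
    simp
  have hF1 : FpTerm k S p s w 1 = u * (1 + v^2*(1+t+t^2) + v^3*(1+t+t^2+t^3)) := by
    rw [FpTerm, if_neg hpS]
    have hset : (Finset.range (3*1+1)).filter (fun b : ℕ => (b:ℤ) ≠ 2*((1:ℕ):ℤ) - 1)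
        = {0, 2, 3} := by decide
    rw [hset, show ({0,2,3} : Finset ℕ) = insert 0 (insert 2 {3}) from rfl,
      Finset.sum_insert (by decide), Finset.sum_insert (by decide), Finset.sum_singleton,
      hcn 0 w, hcn 2 w, hcn 3 w, hcn 1 s, hrs0, hrs2, hrs3, ← hv, ← hu]
    ring_nf
  -- term bound
  have hterm_bound : ∀ a : ℕ, ‖FpTerm k S p s w a‖ ≤ (6*(a:ℝ)+2) * ρ^a := by
    intro a
    have ha0 : (0:ℝ) ≤ (a:ℝ) := Nat.cast_nonneg a
    rw [FpTerm, if_neg hpS, norm_mul]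
    have h1 : ‖(p:ℂ) ^ (-(a:ℂ) * s)‖ = (p:ℝ) ^ (-(a:ℝ) * s.re) := by
      rw [hnorm]; congr 1; simp [Complex.mul_re]
    have h2 : ∀ b ∈ (Finset.range (3*a+1)).filter (fun b : ℕ => (b:ℤ) ≠ 2*(a:ℤ) - 1),
        ‖(p:ℂ) ^ (-(b:ℂ) * w) * (rstar k (p^b) : ℂ)‖ ≤ 2 * (p:ℝ) ^ ((3*(a:ℝ))/16) := by
      intro b hb
      have hble : (b:ℝ) ≤ 3*(a:ℝ) := by
        have := Finset.mem_range.mp (Finset.mem_filter.mp hb).1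
        exact_mod_cast Nat.lt_succ_iff.mp this
      have hb0 : (0:ℝ) ≤ (b:ℝ) := Nat.cast_nonneg b
      rw [norm_mul, hnorm, Complex.norm_real, Real.norm_eq_abs]
      have hre : ((-(b:ℂ) * w).re) = -(b:ℝ) * w.re := by simp [Complex.mul_re]
      have hPb : (P:ℝ)^b = (p:ℝ) ^ (((2*k-1:ℕ):ℝ) * b) := by
        rw [hPdef, ← Real.rpow_natCast (p:ℝ) (2*k-1), hpowb]
      calc (p:ℝ) ^ ((-(b:ℂ) * w).re) * |rstar k (p^b)|
          ≤ (p:ℝ) ^ (-(b:ℝ) * w.re) * (2 * P^b) := by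
            rw [hre]
            exact mul_le_mul_of_nonneg_left (hrsb b) (Real.rpow_nonneg hr0.le _)
        _ = 2 * ((p:ℝ) ^ (-(b:ℝ) * w.re) * (p:ℝ) ^ (((2*k-1:ℕ):ℝ) * b)) := by
            rw [hPb]; ring
        _ = 2 * (p:ℝ) ^ (-(b:ℝ) * w.re + ((2*k-1:ℕ):ℝ) * b) := by
            rw [← Real.rpow_add hr0]
        _ ≤ 2 * (p:ℝ) ^ ((3*(a:ℝ))/16) := by
            have hmul := mul_le_mul_of_nonneg_left hw hb0
            refine mul_le_mul_of_nonneg_left (hrle ?_) (by norm_num)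
            rw [hmcast]
            nlinarith
    have hsum : ‖∑ b ∈ (Finset.range (3*a+1)).filter (fun b : ℕ => (b:ℤ) ≠ 2*(a:ℤ) - 1),
        (p:ℂ) ^ (-(b:ℂ) * w) * (rstar k (p^b) : ℂ)‖
        ≤ (3*(a:ℝ)+1) * (2 * (p:ℝ) ^ ((3*(a:ℝ))/16)) := by
      refine (norm_sum_le _ _).trans ?_
      refine (Finset.sum_le_sum h2).trans ?_
      rw [Finset.sum_const, nsmul_eq_mul]
      have hcard : (((Finset.range (3*a+1)).filter
          (fun b : ℕ => (b:ℤ) ≠ 2*(a:ℤ) - 1)).card : ℝ) ≤ 3*(a:ℝ)+1 := by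
        have := (Finset.card_filter_le (Finset.range (3*a+1))
          (fun b : ℕ => (b:ℤ) ≠ 2*(a:ℤ) - 1)).trans_eq (Finset.card_range _)
        exact_mod_cast this
      exact mul_le_mul_of_nonneg_right hcard (by positivity)
    calc ‖(p:ℂ) ^ (-(a:ℂ) * s)‖ * ‖∑ b ∈ _, _‖
        ≤ (p:ℝ) ^ (-(a:ℝ) * s.re) * ((3*(a:ℝ)+1) * (2 * (p:ℝ) ^ ((3*(a:ℝ))/16))) := by
          rw [h1]
          exact mul_le_mul_of_nonneg_left hsum (Real.rpow_nonneg hr0.le _)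
      _ = (6*(a:ℝ)+2) * ((p:ℝ) ^ (-(a:ℝ) * s.re) * (p:ℝ) ^ ((3*(a:ℝ))/16)) := by ring
      _ = (6*(a:ℝ)+2) * (p:ℝ) ^ (-(a:ℝ) * s.re + (3*(a:ℝ))/16) := by
          rw [← Real.rpow_add hr0]
      _ ≤ (6*(a:ℝ)+2) * (p:ℝ) ^ ((-(3/4) : ℝ) * (a:ℝ)) := by
          have hmul := mul_le_mul_of_nonneg_left hs ha0
          exact mul_le_mul_of_nonneg_left (hrle (by nlinarith)) (by positivity)
      _ = (6*(a:ℝ)+2) * ρ^a := by rw [hρdef, hpowb]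
  have hmaj : ∀ a : ℕ, (6*(a:ℝ)+2) * ρ^a ≤ (6*(a:ℝ)+14) * (1/2:ℝ)^a := by
    intro a
    exact mul_le_mul (by linarith [Nat.cast_nonneg (α := ℝ) a])
      (pow_le_pow_left₀ hρ0 hρhalf a) (by positivity) (by positivity)
  have hsummable : Summable (FpTerm k S p s w) := by
    refine Summable.of_norm_bounded (hgs 6 14) fun a => ?_
    exact (hterm_bound a).trans (hmaj a)
  have hnormsum : Summable (fun a => ‖FpTerm k S p s w a‖) :=
    Summable.of_nonneg_of_le (fun a => norm_nonneg _)
      (fun a => (hterm_bound a).trans (hmaj a)) (hgs 6 14)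
  set R : ℂ := ∑' a : ℕ, FpTerm k S p s w (a+2) with hRdef
  have hFp : Fp k S p s w = 1 + u * (1 + v^2*(1+t+t^2) + v^3*(1+t+t^2+t^3)) + R := by
    rw [Fp, ← Summable.sum_add_tsum_nat_add 2 hsummable, Finset.sum_range_succ, Finset.sum_range_one,
      hF0, hF1]
  have hρsq : ρ^2 = (p:ℝ) ^ (-(3/2) : ℝ) := by
    rw [hρdef, hpowb]; norm_num
  have hbnd2 : ∀ a : ℕ, ‖FpTerm k S p s w (a+2)‖ ≤ ρ^2 * ((6*(a:ℝ)+14) * (1/2:ℝ)^a) := by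
    intro a
    refine (hterm_bound (a+2)).trans ?_
    have h2' : ρ^a ≤ (1/2:ℝ)^a := pow_le_pow_left₀ hρ0 hρhalf a
    have e1 : (6*((a+2:ℕ):ℝ)+2) * ρ^(a+2) = ρ^2 * ((6*(a:ℝ)+14) * ρ^a) := by push_cast; ring
    have e2 : ρ^2 * ((6*(a:ℝ)+14) * ρ^a) ≤ ρ^2 * ((6*(a:ℝ)+14) * (1/2:ℝ)^a) := by
      refine mul_le_mul_of_nonneg_left ?_ (by positivity)
      exact mul_le_mul_of_nonneg_left h2' (by positivity)
    exact e1.le.trans e2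
  have hRbound : ‖R‖ ≤ C₀ * ρ^2 := by
    have htail : Summable (fun a : ℕ => ‖FpTerm k S p s w (a+2)‖) :=
      Summable.of_nonneg_of_le (fun a => norm_nonneg _) hbnd2 (((hgs 6 14).mul_left (ρ^2)))
    calc ‖R‖ ≤ ∑' a : ℕ, ‖FpTerm k S p s w (a+2)‖ := norm_tsum_le_tsum_norm htail
      _ ≤ ∑' a : ℕ, ρ^2 * ((6*(a:ℝ)+14) * (1/2:ℝ)^a) :=
          Summable.tsum_le_tsum hbnd2 htail ((hgs 6 14).mul_left _)
      _ = ρ^2 * C₀ := tsum_mul_left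
      _ = C₀ * ρ^2 := mul_comm _ _
  -- Gp factors
  have hYfac : (p:ℂ) ^ (-(s + 2*(w - 2*(k:ℂ) + 1))) = u * (v^2 * t^2) := by
    have he : -(s + 2*(w - 2*(k:ℂ) + 1))
        = (-s) + (((2:ℕ):ℂ) * (-w) + ((2:ℕ):ℂ) * ((2*k-1 : ℕ):ℂ)) := by
      rw [hmcastC]; push_cast; ring
    rw [he, Complex.cpow_add _ _ hq, Complex.cpow_add _ _ hq, Complex.cpow_nat_mul,
      Complex.cpow_nat_mul, Complex.cpow_natCast, ← hu, ← hv, ← ht]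
  have hZfac : (p:ℂ) ^ (-(s + 3*(w - 2*(k:ℂ) + 1))) = u * (v^3 * t^3) := by
    have he : -(s + 3*(w - 2*(k:ℂ) + 1))
        = (-s) + (((3:ℕ):ℂ) * (-w) + ((3:ℕ):ℂ) * ((2*k-1 : ℕ):ℂ)) := by
      rw [hmcastC]; push_cast; ring
    rw [he, Complex.cpow_add _ _ hq, Complex.cpow_add _ _ hq, Complex.cpow_nat_mul,
      Complex.cpow_nat_mul, Complex.cpow_natCast, ← hu, ← hv, ← ht]
  have hGeq : Gp k S p s w = (1 - u) * (1 - u*(v^2*t^2)) * (1 - u*(v^3*t^3))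
      * (1 + u + u*(v^2*t^2) + u*(v^3*t^3)
        + (u*v^2*t^0 + u*v^2*t^1 + u*v^3*t^0 + u*v^3*t^1 + u*v^3*t^2) + R) := by
    rw [Gp, hYfac, hZfac, hFp, ← hu]
    ring
  -- norm bounds on X, Y, Z, E
  have hXb : ‖u‖ ≤ ρ := by
    have : ‖u‖ = ‖u * v^0 * t^0‖ := by rw [pow_zero, pow_zero, mul_one, mul_one]
    rw [this, hρdef]
    exact hub 0 0 _ (by push_cast; linarith)
  have hYb : ‖u*(v^2*t^2)‖ ≤ ρ := by
    rw [← mul_assoc, hρdef]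
    exact hub 2 2 _ (by rw [hmcast]; push_cast; nlinarith)
  have hZb : ‖u*(v^3*t^3)‖ ≤ ρ := by
    rw [← mul_assoc, hρdef]
    exact hub 3 3 _ (by rw [hmcast]; push_cast; nlinarith)
  have hE1 : ‖u*v^2*t^0‖ ≤ (p:ℝ) ^ (-(5/4) : ℝ) :=
    hub 2 0 _ (by rw [hmcast]; push_cast; nlinarith)
  have hE2 : ‖u*v^2*t^1‖ ≤ (p:ℝ) ^ (-(5/4) : ℝ) :=
    hub 2 1 _ (by rw [hmcast]; push_cast; nlinarith)
  have hE3 : ‖u*v^3*t^0‖ ≤ (p:ℝ) ^ (-(5/4) : ℝ) :=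
    hub 3 0 _ (by rw [hmcast]; push_cast; nlinarith)
  have hE4 : ‖u*v^3*t^1‖ ≤ (p:ℝ) ^ (-(5/4) : ℝ) :=
    hub 3 1 _ (by rw [hmcast]; push_cast; nlinarith)
  have hE5 : ‖u*v^3*t^2‖ ≤ (p:ℝ) ^ (-(5/4) : ℝ) :=
    hub 3 2 _ (by rw [hmcast]; push_cast; nlinarith)
  have hEb : ‖u*v^2*t^0 + u*v^2*t^1 + u*v^3*t^0 + u*v^3*t^1 + u*v^3*t^2‖
      ≤ 5 * (p:ℝ) ^ (-(5/4) : ℝ) := by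
    calc ‖u*v^2*t^0 + u*v^2*t^1 + u*v^3*t^0 + u*v^3*t^1 + u*v^3*t^2‖
        ≤ ‖u*v^2*t^0 + u*v^2*t^1 + u*v^3*t^0 + u*v^3*t^1‖ + ‖u*v^3*t^2‖ := norm_add_le _ _
      _ ≤ ‖u*v^2*t^0 + u*v^2*t^1 + u*v^3*t^0‖ + ‖u*v^3*t^1‖ + ‖u*v^3*t^2‖ := by
          linarith [norm_add_le (u*v^2*t^0 + u*v^2*t^1 + u*v^3*t^0) (u*v^3*t^1)]
      _ ≤ ‖u*v^2*t^0 + u*v^2*t^1‖ + ‖u*v^3*t^0‖ + ‖u*v^3*t^1‖ + ‖u*v^3*t^2‖ := by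
          linarith [norm_add_le (u*v^2*t^0 + u*v^2*t^1) (u*v^3*t^0)]
      _ ≤ ‖u*v^2*t^0‖ + ‖u*v^2*t^1‖ + ‖u*v^3*t^0‖ + ‖u*v^3*t^1‖ + ‖u*v^3*t^2‖ := by
          linarith [norm_add_le (u*v^2*t^0) (u*v^2*t^1)]
      _ ≤ 5 * (p:ℝ) ^ (-(5/4) : ℝ) := by linarith
  -- final assembly
  have hmain := key_poly_bound (E := u*v^2*t^0 + u*v^2*t^1 + u*v^3*t^0 + u*v^3*t^1 + u*v^3*t^2)
    (R := R) hXb hYb hZb hρhalf hρ0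
  have h32le : (p:ℝ) ^ (-(3/2) : ℝ) ≤ (p:ℝ) ^ (-(5/4) : ℝ) := hrle (by norm_num)
  have h54pos : (0:ℝ) ≤ (p:ℝ) ^ (-(5/4) : ℝ) := Real.rpow_nonneg hr0.le _
  have hRb' : ‖R‖ ≤ C₀ * (p:ℝ) ^ (-(5/4) : ℝ) := by
    refine hRbound.trans ?_
    rw [hρsq]
    exact mul_le_mul_of_nonneg_left h32le hC₀
  calc ‖Gp k S p s w - 1‖
      = ‖(1 - u) * (1 - u*(v^2*t^2)) * (1 - u*(v^3*t^3))
        * (1 + u + u*(v^2*t^2) + u*(v^3*t^3)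
          + (u*v^2*t^0 + u*v^2*t^1 + u*v^3*t^0 + u*v^3*t^1 + u*v^3*t^2) + R) - 1‖ := by
        rw [hGeq]
    _ ≤ 18*ρ^2 + 4*(‖u*v^2*t^0 + u*v^2*t^1 + u*v^3*t^0 + u*v^3*t^1 + u*v^3*t^2‖ + ‖R‖) := hmain
    _ ≤ 18*((p:ℝ) ^ (-(5/4) : ℝ)) + 4*(5 * (p:ℝ) ^ (-(5/4) : ℝ) + C₀ * (p:ℝ) ^ (-(5/4) : ℝ)) := by
        have : ρ^2 ≤ (p:ℝ) ^ (-(5/4) : ℝ) := by rw [hρsq]; exact h32le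
        linarith [hEb, hRb']
    _ = (38 + 4*C₀) * (p:ℝ) ^ (-(5/4) : ℝ) := by ring
    _ = (38 + 4*C₀) * (p:ℝ)^(-(5/4 : ℝ)) := by norm_num
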